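/- arXiv:2408.14746 — 5 statements merged into one kernel-verified Lean document; each statement's English description precedes it below -/
import Mathlib

section
/- Let v, a > 0, l ≥ v²/a, and let C_r, m, g, ρ, A, C_d, D, R be real constants. Define the three-phase power profile P : ℝ → ℝ by P(t) = (C_r·m·g + (1/2)·ρ·A·C_d·(a·t)² + m·a)·(a·t) for 0 ≤ t ≤ v/a, P(t) = (C_r·m·g + (1/2)·ρ·A·C_d·v²)·v for v/a ≤ t ≤ l/v, and P(t) = (C_r·m·g + (1/2)·ρ·A·C_d·(v − a·(t − l/v))² − m·a)·(v − a·(t − l/v)) for l/v ≤ t ≤ l/v + v/a. Then the efficiency-weighted total energy D·∫₀^{l/v} P(t) dt + R·∫_{l/v}^{l/v + v/a} P(t) dt equals D·(C_r·m·g + (1/4)·ρ·A·C_d·v² + m·a)·v²/(2a) + D·(C_r·m·g + (1/2)·ρ·A·C_d·v²)·(l − v²/a) + R·(C_r·m·g + (1/4)·ρ·A·C_d·v² − m·a)·v²/(2a), i.e. the paper's total travel-energy formula q↑ + q→ + q↓ (eqs. (14)–(17)). -/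
open intervalIntegral

set_option maxHeartbeats 1000000

/-- The efficiency-weighted total energy of the three-phase trip
(acceleration from rest to `v` with acceleration `a`, cruising at `v`,
deceleration to rest, over total distance `l ≥ v²/a`) equals the paper's total
travel-energy formula q↑ + q→ + q↓ (eqs. (14)–(17)), where `D` weights the
acceleration and cruising phases and `R` weights the deceleration phase. -/
theorem three_phase_travel_energy
    (v a l C_r m g ρ A C_d D R : ℝ)
    (hv : 0 < v) (ha : 0 < a) (hl : v^2 / a ≤ l) :
    D * (∫ t in (0:ℝ)..(l / v),
          (if t ≤ v / a then
              (C_r * m * g + (1/2) * ρ * A * C_d * (a * t)^2 + m * a) * (a * t)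
           else if t ≤ l / v then
              (C_r * m * g + (1/2) * ρ * A * C_d * v^2) * v
           else
              (C_r * m * g + (1/2) * ρ * A * C_d * (v - a * (t - l / v))^2
                - m * a) * (v - a * (t - l / v))))
      + R * (∫ t in (l / v)..(l / v + v / a),
          (if t ≤ v / a then
              (C_r * m * g + (1/2) * ρ * A * C_d * (a * t)^2 + m * a) * (a * t)
           else if t ≤ l / v then
              (C_r * m * g + (1/2) * ρ * A * C_d * v^2) * v
           else
              (C_r * m * g + (1/2) * ρ * A * C_d * (v - a * (t - l / v))^2
                - m * a) * (v - a * (t - l / v))))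
      = D * (C_r * m * g + (1/4) * ρ * A * C_d * v^2 + m * a) * (v^2 / (2 * a))
        + D * (C_r * m * g + (1/2) * ρ * A * C_d * v^2) * (l - v^2 / a)
        + R * (C_r * m * g + (1/4) * ρ * A * C_d * v^2 - m * a)
            * (v^2 / (2 * a)) := by
  have ha' : a ≠ 0 := ha.ne'
  have hv' : v ≠ 0 := hv.ne'
  set f : ℝ → ℝ := fun t =>
          (if t ≤ v / a then
              (C_r * m * g + (1/2) * ρ * A * C_d * (a * t)^2 + m * a) * (a * t)
           else if t ≤ l / v then
              (C_r * m * g + (1/2) * ρ * A * C_d * v^2) * v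
           else
              (C_r * m * g + (1/2) * ρ * A * C_d * (v - a * (t - l / v))^2
                - m * a) * (v - a * (t - l / v))) with hf
  have h0va : (0:ℝ) ≤ v / a := le_of_lt (div_pos hv ha)
  have hvalv : v / a ≤ l / v := by
    rw [div_le_div_iff₀ ha hv]
    nlinarith [(div_le_iff₀ ha).mp hl]
  have hlv2 : l / v ≤ l / v + v / a := by linarith
  -- phase 1 integrand and antiderivative
  set g1 : ℝ → ℝ := fun t =>
    (C_r * m * g + (1/2) * ρ * A * C_d * (a * t)^2 + m * a) * (a * t) with hg1
  have hg1cont : Continuous g1 := by fun_prop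
  have hint1 : ∫ t in (0:ℝ)..(v / a), g1 t
      = (C_r * m * g + (1/4) * ρ * A * C_d * v^2 + m * a) * (v^2 / (2 * a)) := by
    have hderiv : ∀ x ∈ Set.uIcc (0:ℝ) (v/a),
        HasDerivAt (fun t : ℝ => ((C_r * m * g + m * a) * a / 2) * t^2
            + ((1/2) * ρ * A * C_d * a^3 / 4) * t^4) (g1 x) x := by
      intro x _
      have h2 := (hasDerivAt_pow 2 x).const_mul ((C_r * m * g + m * a) * a / 2)
      have h4 := (hasDerivAt_pow 4 x).const_mul ((1/2) * ρ * A * C_d * a^3 / 4)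
      convert h2.add h4 using 1
      · rfl
      · rfl
      · rfl
      simp [hg1]; ring
    have key := intervalIntegral.integral_eq_sub_of_hasDerivAt hderiv
      (hg1cont.intervalIntegrable _ _)
    rw [key]; field_simp; ring
  -- cruise constant
  set c2 : ℝ := (C_r * m * g + (1/2) * ρ * A * C_d * v^2) * v with hc2
  -- phase 3 integrand
  set g3 : ℝ → ℝ := fun t =>
    (C_r * m * g + (1/2) * ρ * A * C_d * (v - a * (t - l / v))^2 - m * a)
      * (v - a * (t - l / v)) with hg3
  have hg3cont : Continuous g3 := by fun_prop
  have hint3 : ∫ t in (l/v)..(l/v + v/a), g3 t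
      = (C_r * m * g + (1/4) * ρ * A * C_d * v^2 - m * a) * (v^2 / (2 * a)) := by
    have hderiv : ∀ x ∈ Set.uIcc (l/v) (l/v + v/a),
        HasDerivAt (fun t : ℝ => (-(C_r * m * g - m * a)/(2*a)) * (v - a * (t - l/v))^2
            + (-((1/2) * ρ * A * C_d)/(4*a)) * (v - a * (t - l/v))^4) (g3 x) x := by
      intro x _
      have hu : HasDerivAt (fun t : ℝ => v - a * (t - l / v)) (-a) x := by
        simpa using (((hasDerivAt_id x).sub_const (l/v)).const_mul a).const_sub v
      have h2 := (hu.pow 2).const_mul (-(C_r * m * g - m * a)/(2*a))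
      have h4 := (hu.pow 4).const_mul (-((1/2) * ρ * A * C_d)/(4*a))
      convert h2.add h4 using 1
      · rfl
      · rfl
      · rfl
      simp [hg3]; field_simp; ring
    have key := intervalIntegral.integral_eq_sub_of_hasDerivAt hderiv
      (hg3cont.intervalIntegrable _ _)
    rw [key]; field_simp; ring
  -- f agrees with the pieces
  have heq1 : Set.EqOn f g1 (Set.uIcc (0:ℝ) (v/a)) := by
    intro t ht
    rw [Set.uIcc_of_le h0va] at ht
    simp [hf, hg1, ht.2]
  have heq2 : ∀ t ∈ Set.uIoc (v/a) (l/v), f t = c2 := by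
    intro t ht
    rw [Set.uIoc_of_le hvalv] at ht
    simp [hf, hc2, not_le.mpr ht.1, ht.2]
  have heq3 : ∀ t ∈ Set.uIoc (l/v) (l/v + v/a), f t = g3 t := by
    intro t ht
    rw [Set.uIoc_of_le hlv2] at ht
    have h1 : ¬ t ≤ v / a := not_le.mpr (lt_of_le_of_lt hvalv ht.1)
    have h2 : ¬ t ≤ l / v := not_le.mpr ht.1
    simp [hf, hg3, h1, h2]
  -- integrability of f on the two subintervals of phase-1+2
  have hi1 : IntervalIntegrable f MeasureTheory.volume 0 (v/a) :=
    (hg1cont.intervalIntegrable _ _).congr_ae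
      (MeasureTheory.ae_restrict_of_forall_mem measurableSet_uIoc
        (fun t ht => (heq1 (Set.uIoc_subset_uIcc ht)).symm))
  have hi2 : IntervalIntegrable f MeasureTheory.volume (v/a) (l/v) :=
    (intervalIntegrable_const (c := c2)).congr_ae
      (MeasureTheory.ae_restrict_of_forall_mem measurableSet_uIoc
        (fun t ht => (heq2 t ht).symm))
  have hsplit : ∫ t in (0:ℝ)..(l/v), f t
      = (∫ t in (0:ℝ)..(v/a), f t) + ∫ t in (v/a)..(l/v), f t :=
    (intervalIntegral.integral_add_adjacent_intervals hi1 hi2).symm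
  have hI1 : ∫ t in (0:ℝ)..(v/a), f t = ∫ t in (0:ℝ)..(v/a), g1 t :=
    intervalIntegral.integral_congr heq1
  have hI2 : ∫ t in (v/a)..(l/v), f t = c2 * (l/v - v/a) := by
    rw [intervalIntegral.integral_congr_ae
      (MeasureTheory.ae_of_all _ (fun t ht => heq2 t ht)),
      intervalIntegral.integral_const, smul_eq_mul, mul_comm]
  have hI3 : ∫ t in (l/v)..(l/v + v/a), f t = ∫ t in (l/v)..(l/v + v/a), g3 t :=
    intervalIntegral.integral_congr_ae
      (MeasureTheory.ae_of_all _ (fun t ht => heq3 t ht))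
  rw [hsplit, hI1, hI2, hI3, hint1, hint3, hc2]
  field_simp
end

section
/- Let v, a > 0 with v²/a ≤ 100 and let C_r, m, g, ρ, A, C_d, D be real constants. With Q the paper's improved per-100-m energy function (eq. (5)) and T(l) = D·(C_r·m·g + (1/2)·ρ·A·C_d·v²)·l the traditional energy function (eq. (1)), for every l in the cruising range [v²/(2a), 100 − v²/(2a)] the gap Q(l) − T(l) equals the constant D·(m·a − (1/4)·ρ·A·C_d·v²)·v²/(2a), independent of l. Consequently, if D > 0 and m·a > (1/4)·ρ·A·C_d·v², then Q(l) > T(l) throughout the cruising range: accounting for the start-stop process yields strictly higher predicted energy consumption than the traditional model, and the two energy–distance curves are parallel on the cruising range. -/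
/-- The paper's improved per-100-m cumulative energy function (eq. (5)). -/
noncomputable def improvedEnergy (v a C_r m g ρ A C_d D R : ℝ) (l : ℝ) : ℝ :=
  if l ≤ v^2 / (2*a) then
    D * (C_r*m*g + (1/4)*ρ*A*C_d*v^2 + m*a) * l
  else if l ≤ 100 - v^2 / (2*a) then
    D * (C_r*m*g + (1/4)*ρ*A*C_d*v^2 + m*a) * (v^2 / (2*a))
      + D * (C_r*m*g + (1/2)*ρ*A*C_d*v^2) * (l - v^2 / (2*a))
  else
    D * (C_r*m*g + (1/4)*ρ*A*C_d*v^2 + m*a) * (v^2 / (2*a))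
      + D * (C_r*m*g + (1/2)*ρ*A*C_d*v^2) * ((100 - v^2 / (2*a)) - v^2 / (2*a))
      + R * (C_r*m*g + (1/4)*ρ*A*C_d*v^2 - m*a) * (l - (100 - v^2 / (2*a)))

/-- The traditional per-100-m energy function (eq. (1)), which ignores the
start-stop process. -/
noncomputable def traditionalEnergy (v C_r m g ρ A C_d D : ℝ) (l : ℝ) : ℝ :=
  D * (C_r*m*g + (1/2)*ρ*A*C_d*v^2) * l

/-- On the cruising range `[v²/(2a), 100 − v²/(2a)]` the gap between the
improved energy model (eq. (5)) and the traditional model (eq. (1)) is the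
constant `D·(m·a − (1/4)·ρ·A·C_d·v²)·v²/(2a)`, independent of `l`; hence if
`D > 0` and `m·a > (1/4)·ρ·A·C_d·v²`, the improved model predicts strictly
higher energy consumption throughout the cruising range, and the two
energy–distance curves are parallel there. -/
theorem improved_vs_traditional_cruising_gap
    (v a C_r m g ρ A C_d D R : ℝ)
    (hv : 0 < v) (ha : 0 < a) (h100 : v^2 / a ≤ 100) :
    (∀ l ∈ Set.Icc (v^2 / (2*a)) (100 - v^2 / (2*a)),
        improvedEnergy v a C_r m g ρ A C_d D R l
            - traditionalEnergy v C_r m g ρ A C_d D l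
          = D * (m*a - (1/4)*ρ*A*C_d*v^2) * (v^2 / (2*a))) ∧
    (0 < D → (1/4)*ρ*A*C_d*v^2 < m*a →
      ∀ l ∈ Set.Icc (v^2 / (2*a)) (100 - v^2 / (2*a)),
        traditionalEnergy v C_r m g ρ A C_d D l
          < improvedEnergy v a C_r m g ρ A C_d D R l) := by
  have hs : 0 < v^2 / (2*a) := by positivity
  have key : ∀ l ∈ Set.Icc (v^2 / (2*a)) (100 - v^2 / (2*a)),
      improvedEnergy v a C_r m g ρ A C_d D R l
        - traditionalEnergy v C_r m g ρ A C_d D l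
      = D * (m*a - (1/4)*ρ*A*C_d*v^2) * (v^2 / (2*a)) := by
    intro l ⟨h1, h2⟩
    unfold improvedEnergy traditionalEnergy
    by_cases hc : l ≤ v^2 / (2*a)
    · have : l = v^2 / (2*a) := le_antisymm hc h1
      subst this
      simp only [if_pos le_rfl]
      ring
    · rw [if_neg hc, if_pos h2]
      ring
  refine ⟨key, fun hD hma l hl => ?_⟩
  have := key l hl
  have hpos : 0 < D * (m*a - (1/4)*ρ*A*C_d*v^2) * (v^2 / (2*a)) := by
    apply mul_pos (mul_pos hD (by linarith)) hs
  linarith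
end

section
/- Let v, a > 0 with v²/a ≤ 100 and let C_r, m, g, ρ, A, C_d, D, R be real constants. With Q the paper's improved per-100-m energy function (eq. (5)) and T(l) = D·(C_r·m·g + (1/2)·ρ·A·C_d·v²)·l the traditional energy function (eq. (1)), the gap over a full 100-meter segment satisfies Q(100) − T(100) = (v²/(2a))·[(D − R)·(m·a − C_r·m·g) − ((3/4)·D − (1/4)·R)·ρ·A·C_d·v²]. In particular, if (D − R)·(m·a − C_r·m·g) > ((3/4)·D − (1/4)·R)·ρ·A·C_d·v², then Q(100) > T(100): the traditional model strictly underestimates the total energy consumed over the segment. -/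
/-- Over a full 100-meter segment the gap between the improved model (eq. (5))
and the traditional model (eq. (1)) is
`(v²/(2a))·[(D − R)·(m·a − C_r·m·g) − ((3/4)·D − (1/4)·R)·ρ·A·C_d·v²]`;
in particular, if `(D − R)·(m·a − C_r·m·g) > ((3/4)·D − (1/4)·R)·ρ·A·C_d·v²`,
the traditional model strictly underestimates total energy consumption. -/
theorem improved_vs_traditional_full_segment_gap
    (v a C_r m g ρ A C_d D R : ℝ)
    (hv : 0 < v) (ha : 0 < a) (h100 : v^2 / a ≤ 100) :
    (improvedEnergy v a C_r m g ρ A C_d D R 100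
        - traditionalEnergy v C_r m g ρ A C_d D 100
      = (v^2 / (2*a)) * ((D - R) * (m*a - C_r*m*g)
          - ((3/4)*D - (1/4)*R) * ρ*A*C_d*v^2)) ∧
    (((3/4)*D - (1/4)*R) * ρ*A*C_d*v^2 < (D - R) * (m*a - C_r*m*g) →
      traditionalEnergy v C_r m g ρ A C_d D 100
        < improvedEnergy v a C_r m g ρ A C_d D R 100) := by
  have ha' : (2*a) ≠ 0 := by positivity
  have hs : 0 < v^2 / (2*a) := by positivity
  have hle : v^2 / (2*a) ≤ 50 := by
    rw [div_le_iff₀ (by positivity)]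
    nlinarith [div_le_iff₀ ha |>.mp h100]
  have h1 : ¬ (100 : ℝ) ≤ v^2 / (2*a) := by linarith
  have h2 : ¬ (100 : ℝ) ≤ 100 - v^2 / (2*a) := by linarith
  have key : improvedEnergy v a C_r m g ρ A C_d D R 100
      - traditionalEnergy v C_r m g ρ A C_d D 100
    = (v^2 / (2*a)) * ((D - R) * (m*a - C_r*m*g)
        - ((3/4)*D - (1/4)*R) * ρ*A*C_d*v^2) := by
    rw [improvedEnergy, traditionalEnergy, if_neg h1, if_neg h2]
    ring
  refine ⟨key, fun hlt => ?_⟩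
  have : 0 < (v^2 / (2*a)) * ((D - R) * (m*a - C_r*m*g)
        - ((3/4)*D - (1/4)*R) * ρ*A*C_d*v^2) := by
    apply mul_pos hs; linarith
  linarith [key]
end

section
/- Let v, a > 0 with v²/a ≤ 100 and let C_r, m, g, ρ, A, C_d, D, R be real constants. Then the value Q(100) of the paper's piecewise per-100-m energy function (eq. (5)) equals the efficiency-weighted integral energy of the full three-phase 100-meter trip: Q(100) = D·∫₀^{100/v} P(t) dt + R·∫_{100/v}^{100/v + v/a} P(t) dt, where P(t) = (C_r·m·g + (1/2)·ρ·A·C_d·(a·t)² + m·a)·(a·t) for 0 ≤ t ≤ v/a, P(t) = (C_r·m·g + (1/2)·ρ·A·C_d·v²)·v for v/a ≤ t ≤ 100/v, and P(t) = (C_r·m·g + (1/2)·ρ·A·C_d·(v − a·(t − 100/v))² − m·a)·(v − a·(t − 100/v)) for 100/v ≤ t ≤ 100/v + v/a. -/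
open intervalIntegral

set_option maxHeartbeats 1000000 in
/-- The value `Q(100)` of the paper's piecewise per-100-m energy function
(eq. (5)) equals the efficiency-weighted integral of the instantaneous
mechanical power over the full three-phase 100-meter trip, with discharge
factor `D` on the acceleration and cruising phases and recuperation factor `R`
on the deceleration phase. -/
theorem improvedEnergy_eq_integral_energy
    (v a C_r m g ρ A C_d D R : ℝ)
    (hv : 0 < v) (ha : 0 < a) (h100 : v^2 / a ≤ 100) :
    improvedEnergy v a C_r m g ρ A C_d D R 100
      = D * (∫ t in (0:ℝ)..(100 / v),
            (if t ≤ v / a then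
                (C_r*m*g + (1/2)*ρ*A*C_d*(a*t)^2 + m*a) * (a*t)
             else if t ≤ 100 / v then
                (C_r*m*g + (1/2)*ρ*A*C_d*v^2) * v
             else
                (C_r*m*g + (1/2)*ρ*A*C_d*(v - a*(t - 100/v))^2 - m*a)
                  * (v - a*(t - 100/v))))
        + R * (∫ t in (100/v : ℝ)..(100/v + v/a),
            (if t ≤ v / a then
                (C_r*m*g + (1/2)*ρ*A*C_d*(a*t)^2 + m*a) * (a*t)
             else if t ≤ 100 / v then
                (C_r*m*g + (1/2)*ρ*A*C_d*v^2) * v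
             else
                (C_r*m*g + (1/2)*ρ*A*C_d*(v - a*(t - 100/v))^2 - m*a)
                  * (v - a*(t - 100/v)))) := by
  have hv' : v ≠ 0 := ne_of_gt hv
  have ha' : a ≠ 0 := ne_of_gt ha
  set f : ℝ → ℝ := fun t =>
    (if t ≤ v / a then
        (C_r*m*g + (1/2)*ρ*A*C_d*(a*t)^2 + m*a) * (a*t)
     else if t ≤ 100 / v then
        (C_r*m*g + (1/2)*ρ*A*C_d*v^2) * v
     else
        (C_r*m*g + (1/2)*ρ*A*C_d*(v - a*(t - 100/v))^2 - m*a)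
          * (v - a*(t - 100/v))) with hf
  have hT0 : (0:ℝ) ≤ v / a := le_of_lt (div_pos hv ha)
  have hsq : v^2 ≤ 100 * a := (div_le_iff₀ ha).mp h100
  have hTb : v / a ≤ 100 / v := by
    rw [div_le_div_iff₀ ha hv]; nlinarith
  -- the three clean (continuous) integrands
  set g1 : ℝ → ℝ := fun t => (C_r*m*g + (1/2)*ρ*A*C_d*(a*t)^2 + m*a) * (a*t) with hg1
  set g2 : ℝ → ℝ := fun _ => (C_r*m*g + (1/2)*ρ*A*C_d*v^2) * v with hg2
  set g3 : ℝ → ℝ := fun t =>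
    (C_r*m*g + (1/2)*ρ*A*C_d*(v - a*(t - 100/v))^2 - m*a) * (v - a*(t - 100/v)) with hg3
  have hc1 : Continuous g1 := by fun_prop
  have hc2 : Continuous g2 := by fun_prop
  have hc3 : Continuous g3 := by fun_prop
  -- f agrees with gi on the appropriate Ioc's
  have e1 : Set.EqOn g1 f (Set.Ioc (0:ℝ) (v/a)) := by
    intro t ht; simp only [hf, if_pos ht.2]; rfl
  have e2 : Set.EqOn g2 f (Set.Ioc (v/a) (100/v)) := by
    intro t ht; simp only [hf, if_neg (not_le.mpr ht.1), if_pos ht.2]; rfl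
  have e3 : Set.EqOn g3 f (Set.Ioc (100/v) (100/v + v/a)) := by
    intro t ht
    have h1 : ¬ t ≤ v / a := not_le.mpr (lt_of_le_of_lt hTb ht.1)
    have h2 : ¬ t ≤ 100 / v := not_le.mpr ht.1
    simp only [hf, if_neg h1, if_neg h2]; rfl
  -- interval integrability of f on the subintervals
  have i1 : IntervalIntegrable f MeasureTheory.volume 0 (v/a) := by
    rw [intervalIntegrable_iff_integrableOn_Ioc_of_le hT0]
    exact (hc1.integrableOn_Ioc).congr_fun e1 measurableSet_Ioc
  have i2 : IntervalIntegrable f MeasureTheory.volume (v/a) (100/v) := by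
    rw [intervalIntegrable_iff_integrableOn_Ioc_of_le hTb]
    exact (hc2.integrableOn_Ioc).congr_fun e2 measurableSet_Ioc
  -- split the first integral
  have hsplit : (∫ t in (0:ℝ)..(100/v), f t)
      = (∫ t in (0:ℝ)..(v/a), f t) + ∫ t in (v/a : ℝ)..(100/v), f t :=
    (integral_add_adjacent_intervals i1 i2).symm
  -- replace f by the clean integrands
  have r1 : (∫ t in (0:ℝ)..(v/a), f t) = ∫ t in (0:ℝ)..(v/a), g1 t := by
    rw [integral_of_le hT0, integral_of_le hT0]
    exact (MeasureTheory.setIntegral_congr_fun measurableSet_Ioc e1).symm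
  have r2 : (∫ t in (v/a : ℝ)..(100/v), f t) = ∫ t in (v/a : ℝ)..(100/v), g2 t := by
    rw [integral_of_le hTb, integral_of_le hTb]
    exact (MeasureTheory.setIntegral_congr_fun measurableSet_Ioc e2).symm
  have hbb : (100/v : ℝ) ≤ 100/v + v/a := by linarith
  have r3 : (∫ t in (100/v : ℝ)..(100/v + v/a), f t)
      = ∫ t in (100/v : ℝ)..(100/v + v/a), g3 t := by
    rw [integral_of_le hbb, integral_of_le hbb]
    exact (MeasureTheory.setIntegral_congr_fun measurableSet_Ioc e3).symm
  -- compute the three clean integrals via antiderivatives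
  have J1 : (∫ t in (0:ℝ)..(v/a), g1 t)
      = (C_r*m*g + (1/4)*ρ*A*C_d*v^2 + m*a) * (v^2 / (2*a)) := by
    have hder : ∀ t ∈ Set.uIcc (0:ℝ) (v/a),
        HasDerivAt (fun t => (C_r*m*g + m*a)*a*t^2/2 + (1/2)*ρ*A*C_d*a^3*t^4/4) (g1 t) t := by
      intro t _
      have h2 := (hasDerivAt_pow 2 t).const_mul ((C_r*m*g + m*a)*a/2)
      have h4 := (hasDerivAt_pow 4 t).const_mul ((1/2)*ρ*A*C_d*a^3/4)
      convert (h2.add h4) using 1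
      · rfl
      · ext x; ring
      · ext x; simp only [Pi.add_apply, Pi.pow_apply]; ring
      · rw [hg1]; norm_num; ring
    rw [integral_eq_sub_of_hasDerivAt hder (hc1.intervalIntegrable _ _)]
    field_simp
    ring
  have J2 : (∫ t in (v/a : ℝ)..(100/v), g2 t)
      = (C_r*m*g + (1/2)*ρ*A*C_d*v^2) * ((100 - v^2 / (2*a)) - v^2 / (2*a)) := by
    rw [hg2, integral_const, smul_eq_mul]
    field_simp
    ring
  have J3 : (∫ t in (100/v : ℝ)..(100/v + v/a), g3 t)
      = (C_r*m*g + (1/4)*ρ*A*C_d*v^2 - m*a) * (100 - (100 - v^2 / (2*a))) := by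
    have hder : ∀ t ∈ Set.uIcc (100/v : ℝ) (100/v + v/a),
        HasDerivAt (fun t => -(1/a) * ((C_r*m*g - m*a)*(v - a*(t - 100/v))^2/2
            + (1/2)*ρ*A*C_d*(v - a*(t - 100/v))^4/4)) (g3 t) t := by
      intro t _
      have hu : HasDerivAt (fun t : ℝ => v - a*(t - 100/v)) (-a) t := by
        simpa using (((hasDerivAt_id t).sub_const (100/v)).const_mul a).const_sub v
      have h2 := (hu.pow 2).const_mul ((C_r*m*g - m*a)/2)
      have h4 := (hu.pow 4).const_mul ((1/2)*ρ*A*C_d/4)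
      have := (h2.add h4).const_mul (-(1/a))
      convert this using 1
      · rfl
      · ext x; ring
      · ext x; simp only [Pi.add_apply, Pi.pow_apply]; ring
      · rw [hg3]; norm_num; field_simp; ring
    rw [integral_eq_sub_of_hasDerivAt hder (hc3.intervalIntegrable _ _)]
    field_simp
    ring
  have h50 : v^2 / (2*a) ≤ 50 := by
    have heq : v^2 / (2*a) = (v^2/a)/2 := by ring
    rw [heq]; linarith
  have hpos : 0 < v^2 / (2*a) := by positivity
  rw [hsplit, r1, r2, r3, J1, J2, J3, improvedEnergy]
  rw [if_neg (by linarith), if_neg (by linarith)]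
  ring
end

section
/- For every t with 0 < t ≤ 84.1, the paper's piecewise linear charging function satisfies SoC(t) ≥ ((0.325·84.1 + 122.7)/84.1)·t, with equality at t = 84.1. Hence the pessimistic criterion, which replaces the charging curve by the chord from the origin to the final observed point (84.1, SoC(84.1)), never overestimates the battery charge level attained after any charging time (equivalently, it overestimates the time required to reach any intermediate charge level). -/
/-- The paper's piecewise linear charging function (eq. (6)). -/
noncomputable def soc (t : ℝ) : ℝ :=
  if t ≤ 50.4 then 2.5 * t
  else if t ≤ 61.5 then 1.5 * t + 50.4
  else 0.325 * t + 122.7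

/-- The pessimistic criterion, which replaces the charging curve by the chord
from the origin to the final observed point `(84.1, SoC(84.1))`, never
overestimates the charge level: `SoC(t) ≥ ((0.325·84.1 + 122.7)/84.1)·t` for
all `0 < t ≤ 84.1`, with equality at `t = 84.1`. -/
theorem soc_ge_pessimistic :
    (∀ t : ℝ, 0 < t → t ≤ 84.1 →
      ((0.325 * 84.1 + 122.7) / 84.1) * t ≤ soc t) ∧
    soc 84.1 = ((0.325 * 84.1 + 122.7) / 84.1) * 84.1 := by
  constructor
  · intro t ht ht'
    unfold soc
    split_ifs with h1 h2 <;> rw [div_mul_eq_mul_div, div_le_iff₀ (by norm_num)] <;> nlinarith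
  · unfold soc
    norm_num
end
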